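/- For any single-mode state σ' on a harmonic oscillator and any α' ∈ ℂ, the infidelity with the coherent state |α'⟩ satisfies 1 - ⟨α'|σ'|α'⟩ ≤ Tr(σ' a†a) - |Tr(σ' a)|² + |Tr(σ' a) - α'|², i.e., infidelity is bounded by phase-space variance plus squared bias. -/

import Mathlib

/-- (Lemma 1, first line.) For any single-mode state `σ'` and `α' ∈ ℂ`, the
infidelity with the coherent state `|α'⟩` is bounded by phase-space variance plus squared bias:
`1 - ⟨α'|σ'|α'⟩ ≤ Tr(σ'a†a) - |Tr(σ'a)|² + |Tr(σ'a)-α'|²`.  The state is encoded through the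
Fock-basis data of the displaced state `τ = D(α')†σ'D(α')`: its diagonal (a probability
distribution `τdiag`), its first moment `τa = Tr(τ a)`; the displacement relations
`Tr(σ'a) = Tr(τ a) + α'`, `Tr(σ'a†a) = Tr(τ a†a) + 2Re(ᾱ'Tr(τ a)) + |α'|²`, and
`⟨α'|σ'|α'⟩ = ⟨0|τ|0⟩` are recorded as hypotheses. -/
theorem infidelity_le_variance_plus_bias
    (α' : ℂ) (τdiag : ℕ → ℝ) (τa : ℂ)
    (hpos : ∀ l, 0 ≤ τdiag l) (hsum : HasSum τdiag 1)
    (hN : Summable fun l : ℕ => (l : ℝ) * τdiag l)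
    (fid : ℝ) (σa : ℂ) (σN : ℝ)
    (hfid : fid = τdiag 0)
    (hσa : σa = τa + α')
    (hσN : σN = (∑' l : ℕ, (l : ℝ) * τdiag l) + 2 * (starRingEnd ℂ α' * τa).re +
      ‖α'‖ ^ 2) :
    1 - fid ≤ σN - ‖σa‖ ^ 2 + ‖σa - α'‖ ^ 2 := by
  have hg : HasSum (fun l : ℕ => if l = 0 then 0 else τdiag l) (1 - τdiag 0) := by
    have := hsum.sub (hasSum_ite_eq 0 (τdiag 0))
    have e : (fun l : ℕ => if l = 0 then (0:ℝ) else τdiag l)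
        = (fun b => τdiag b - if b = 0 then τdiag 0 else 0) := by
      funext l
      by_cases h : l = 0 <;> simp [h]
    rw [e]; exact this
  have key : 1 - τdiag 0 ≤ ∑' l : ℕ, (l : ℝ) * τdiag l := by
    rw [← hg.tsum_eq]
    refine Summable.tsum_le_tsum (fun l => ?_) hg.summable hN
    rcases Nat.eq_zero_or_pos l with h | h
    · simp [h]
    · simp only [if_neg h.ne']
      have h1 : (1:ℝ) ≤ l := by exact_mod_cast h
      nlinarith [hpos l]
  have habs : ‖σa‖ ^ 2 = Complex.normSq τa + Complex.normSq α'
      + 2 * (τa * starRingEnd ℂ α').re := by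
    rw [hσa, Complex.sq_norm, Complex.normSq_add]
  have habs2 : ‖σa - α'‖ ^ 2 = Complex.normSq τa := by
    rw [hσa, add_sub_cancel_right, Complex.sq_norm]
  have hre : (starRingEnd ℂ α' * τa).re = (τa * starRingEnd ℂ α').re := by
    rw [mul_comm]
  rw [hfid, hσN, habs, habs2, hre, Complex.sq_norm]
  linarith
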